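/- Let C ⊆ R^n be nonempty closed convex and D ⊆ R^n nonempty closed, and let F = δ_D + (1/2)dist²(·, C). Suppose x* satisfies 0 ∈ ∂F(x*) and the constraint qualification N_C(Proj_C(x*)) ∩ (−N_D(x*)) = {0}, where N_C is the convex normal cone and N_D the limiting normal cone. Then x* ∈ C ∩ D. -/

import Mathlib

open Filter Topology

variable {H : Type*} [NormedAddCommGroup H] [InnerProductSpace ℝ H]

/-- `v` is a Fréchet subgradient of `f` at `x`. -/
def FSubd (f : H → EReal) (x v : H) : Prop :=
  f x ≠ ⊤ ∧ ∀ ε : ℝ, 0 < ε → ∃ δ : ℝ, 0 < δ ∧ ∀ y : H, ‖y - x‖ < δ →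
    f x + (((inner ℝ v (y - x) : ℝ) - ε * ‖y - x‖ : ℝ) : EReal) ≤ f y

/-- `v` is a limiting (Mordukhovich) subgradient of `f` at `x`. -/
def LSubd (f : H → EReal) (x v : H) : Prop :=
  ∃ xs vs : ℕ → H,
    Tendsto xs atTop (nhds x) ∧
    Tendsto (fun k => f (xs k)) atTop (nhds (f x)) ∧
    (∀ k, FSubd f (xs k) (vs k)) ∧
    Tendsto vs atTop (nhds v)

/-- `f` is proper: never `⊥` and finite somewhere. -/
def ProperFn (f : H → EReal) : Prop :=
  (∀ x, f x ≠ ⊥) ∧ ∃ x, f x ≠ ⊤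

/-- The proximal mapping: set of minimizers of `u ↦ f u + (1/(2λ))‖x - u‖²`. -/
def Prox (lam : ℝ) (f : H → EReal) (x : H) : Set H :=
  {y | ∀ u : H, f y + ((1 / (2 * lam) * ‖x - y‖ ^ 2 : ℝ) : EReal)
      ≤ f u + ((1 / (2 * lam) * ‖x - u‖ ^ 2 : ℝ) : EReal)}

/-- `f` is prox-bounded with threshold (at least) `lf`. -/
def ProxBddWith (f : H → EReal) (lf : ℝ) : Prop :=
  ∀ lam : ℝ, 0 < lam → lam < lf →
    ∃ b : ℝ, ∀ y : H, (b : EReal) ≤ f y + ((1 / (2 * lam) * ‖y‖ ^ 2 : ℝ) : EReal)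

open Classical

noncomputable section

/-- Convex normal cone of `C` at `p`. -/
def ConvexNormalCone {H : Type*} [NormedAddCommGroup H] [InnerProductSpace ℝ H]
    (C : Set H) (p : H) : Set H :=
  {v | ∀ y ∈ C, (inner ℝ v (y - p) : ℝ) ≤ 0}

/-- Limiting normal cone of a closed set `D` at `p`, as the limiting subdifferential of the
indicator function of `D`. -/
def LimitingNormalCone {H : Type*} [NormedAddCommGroup H] [InnerProductSpace ℝ H]
    (D : Set H) (p : H) : Set H :=
  {v | LSubd (fun x => if x ∈ D then (0 : EReal) else ⊤) p v}

/-- A metric projection onto a convex set satisfies the normal cone inequality. -/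
lemma proj_normal_aux {H : Type*} [NormedAddCommGroup H] [InnerProductSpace ℝ H]
    {C : Set H} (hCconv : Convex ℝ C) {x p : H} (hp : p ∈ C)
    (hmin : ∀ y ∈ C, ‖x - p‖ ≤ ‖x - y‖) :
    ∀ y ∈ C, (inner ℝ (x - p) (y - p) : ℝ) ≤ 0 := by
  haveI : Nonempty C := Set.Nonempty.to_subtype ⟨p, hp⟩
  rw [← norm_eq_iInf_iff_real_inner_le_zero hCconv hp]
  refine le_antisymm (le_ciInf fun w => hmin w w.2) ?_
  have hbdd : BddBelow (Set.range fun w : C => ‖x - (w : H)‖) := by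
    refine ⟨0, ?_⟩
    rintro r ⟨w, rfl⟩
    positivity
  exact ciInf_le hbdd (⟨p, hp⟩ : C)

/-- If `0 ∈ ∂F(x*)` for `F = δ_D + (1/2)dist²(·,C)` and the constraint qualification
`N_C(Proj_C x*) ∩ (−N_D(x*)) = {0}` holds, then `x* ∈ C ∩ D`. -/
theorem stationary_point_feasible {n : ℕ}
    (C : Set (EuclideanSpace ℝ (Fin n))) (hCne : C.Nonempty)
    (hC : IsClosed C) (hCconv : Convex ℝ C)
    (D : Set (EuclideanSpace ℝ (Fin n))) (hDne : D.Nonempty) (hD : IsClosed D)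
    (proj : EuclideanSpace ℝ (Fin n) → EuclideanSpace ℝ (Fin n))
    (hproj : ∀ x, proj x ∈ C ∧ ∀ y ∈ C, ‖x - proj x‖ ≤ ‖x - y‖)
    (F : EuclideanSpace ℝ (Fin n) → EReal)
    (hF : ∀ x, F x = (if x ∈ D then (0 : EReal) else ⊤) +
      ((1 / 2 * Metric.infDist x C ^ 2 : ℝ) : EReal))
    (xstar : EuclideanSpace ℝ (Fin n))
    (hstat : LSubd F xstar 0)
    (hCQ : ∀ v, v ∈ ConvexNormalCone C (proj xstar) →
      -v ∈ LimitingNormalCone D xstar → v = 0) :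
    xstar ∈ C ∧ xstar ∈ D := by
  classical
  obtain ⟨xs, vs, hxs, hFval, hFs, hvs⟩ := hstat
  -- each approximating point is in D
  have hxsD : ∀ k, xs k ∈ D := by
    intro k
    by_contra h
    apply (hFs k).1
    rw [hF, if_neg h]
    exact EReal.top_add_coe _
  have hxD : xstar ∈ D := hD.mem_of_tendsto hxs (Filter.Eventually.of_forall hxsD)
  -- distance formula
  have hdist : ∀ x : EuclideanSpace ℝ (Fin n), Metric.infDist x C = ‖x - proj x‖ := by
    intro x
    refine le_antisymm ?_ ?_
    · have := Metric.infDist_le_dist_of_mem (x := x) (hproj x).1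
      rwa [dist_eq_norm] at this
    · by_contra hlt
      push_neg at hlt
      obtain ⟨y, hy, hlt'⟩ := (Metric.infDist_lt_iff hCne).1 hlt
      rw [dist_eq_norm] at hlt'
      exact absurd hlt' (not_lt.2 ((hproj x).2 y hy))
  -- normal cone property of proj
  have hnorm : ∀ x : EuclideanSpace ℝ (Fin n), ∀ y ∈ C,
      (inner ℝ (x - proj x) (y - proj x) : ℝ) ≤ 0 :=
    fun x => proj_normal_aux hCconv (hproj x).1 (hproj x).2
  -- proj is 1-Lipschitz
  have hlip : ∀ a b : EuclideanSpace ℝ (Fin n), ‖proj a - proj b‖ ≤ ‖a - b‖ := by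
    intro a b
    have h1 := hnorm a (proj b) (hproj b).1
    have h2 := hnorm b (proj a) (hproj a).1
    have ha : 0 ≤ (inner ℝ (a - proj a) (proj a - proj b) : ℝ) := by
      rw [show (proj b : EuclideanSpace ℝ (Fin n)) - proj a = -(proj a - proj b) by abel,
        inner_neg_right] at h1
      linarith
    have hb : 0 ≤ (inner ℝ (proj b - b) (proj a - proj b) : ℝ) := by
      rw [show (proj b : EuclideanSpace ℝ (Fin n)) - b = -(b - proj b) by abel,
        inner_neg_left]
      linarith
    have hsum : (inner ℝ (a - b) (proj a - proj b) : ℝ)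
        = (inner ℝ (a - proj a) (proj a - proj b) : ℝ)
          + (inner ℝ (proj b - b) (proj a - proj b) : ℝ) + ‖proj a - proj b‖ ^ 2 := by
      rw [← real_inner_self_eq_norm_sq, ← inner_add_left, ← inner_add_left]
      congr 1
      abel
    have key : ‖proj a - proj b‖ ^ 2 ≤ (inner ℝ (a - b) (proj a - proj b) : ℝ) := by
      linarith
    have hcs := real_inner_le_norm (a - b) (proj a - proj b)
    rcases eq_or_lt_of_le (norm_nonneg (proj a - proj b)) with h0 | h0
    · rw [← h0]; exact norm_nonneg _
    · nlinarith [norm_nonneg (a - b)]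
  set p := proj xstar with hp
  set v := xstar - p with hv
  -- v is in the convex normal cone
  have hvNC : v ∈ ConvexNormalCone C p := fun y hy => hnorm xstar y hy
  -- -v is in the limiting normal cone of D
  have hvND : -v ∈ LimitingNormalCone D xstar := by
    refine ⟨xs, fun k => vs k - (xs k - proj (xs k)), hxs, ?_, ?_, ?_⟩
    · have : (fun k => if xs k ∈ D then (0 : EReal) else ⊤) = fun _ => (0 : EReal) :=
        funext fun k => if_pos (hxsD k)
      rw [this]
      simp only [hxD, if_true]
      exact tendsto_const_nhds
    · intro k
      set x := xs k with hx
      set q := proj x with hq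
      constructor
      · simp [show x ∈ D from hxsD k]
      intro ε hε
      obtain ⟨δ, hδ, hsub⟩ := (hFs k).2 (ε / 2) (half_pos hε)
      refine ⟨min δ ε, lt_min hδ hε, ?_⟩
      intro y hy
      by_cases hyD : y ∈ D
      · simp only [hxsD k, hyD, if_true, zero_add]
        have h1 := hsub y (lt_of_lt_of_le hy (min_le_left _ _))
        rw [hF x, hF y, if_pos (hxsD k), if_pos hyD, zero_add, zero_add,
          ← EReal.coe_add] at h1
        rw [EReal.coe_le_coe_iff] at h1
        -- quadratic upper bound for the squared distance
        have hub : 1 / 2 * Metric.infDist y C ^ 2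
            ≤ 1 / 2 * Metric.infDist x C ^ 2 + (inner ℝ (x - q) (y - x) : ℝ)
              + 1 / 2 * ‖y - x‖ ^ 2 := by
          have h2 : Metric.infDist y C ≤ ‖y - q‖ := by
            have := Metric.infDist_le_dist_of_mem (x := y) (show q ∈ C from (hproj x).1)
            rwa [dist_eq_norm] at this
          have h3 : Metric.infDist y C ^ 2 ≤ ‖y - q‖ ^ 2 := by
            have := Metric.infDist_nonneg (x := y) (s := C)
            nlinarith
          have h4 : ‖y - q‖ ^ 2 = ‖x - q‖ ^ 2
              + 2 * (inner ℝ (x - q) (y - x) : ℝ) + ‖y - x‖ ^ 2 := by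
            have : y - q = (x - q) + (y - x) := by abel
            rw [this, ← real_inner_self_eq_norm_sq, ← real_inner_self_eq_norm_sq,
              ← real_inner_self_eq_norm_sq]
            simp only [inner_add_left, inner_add_right]
            rw [real_inner_comm (y - x) (x - q)]
            ring
          rw [hdist x]
          nlinarith
        have h5 : ‖y - x‖ < ε := lt_of_lt_of_le hy (min_le_right _ _)
        have h6 : 1 / 2 * ‖y - x‖ ^ 2 ≤ ε / 2 * ‖y - x‖ := by nlinarith [norm_nonneg (y - x)]
        have hfin : (inner ℝ (vs k - (x - q)) (y - x) : ℝ) - ε * ‖y - x‖ ≤ 0 := by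
          rw [inner_sub_left]
          linarith
        rw [if_pos (show x ∈ D from hxsD k), zero_add]
        exact_mod_cast hfin
      · simp only [hyD, if_false]
        exact le_top
    · have hqt : Tendsto (fun k => proj (xs k)) atTop (nhds p) := by
        rw [tendsto_iff_norm_sub_tendsto_zero]
        refine squeeze_zero (fun k => norm_nonneg _) (fun k => hlip (xs k) xstar) ?_
        rw [← tendsto_iff_norm_sub_tendsto_zero]
        exact hxs
      have : Tendsto (fun k => vs k - (xs k - proj (xs k))) atTop
          (nhds (0 - (xstar - p))) := (hvs.sub (hxs.sub hqt))
      simpa [hv] using this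
  have hv0 : v = 0 := hCQ v hvNC hvND
  have : xstar = p := by rwa [hv, sub_eq_zero] at hv0
  exact ⟨this ▸ (hproj xstar).1, hxD⟩
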